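/- Let σ > 0 and ℓ > 0 and, for an integer j, define the eigenvalue of the periodic Gaussian covariance operator by λ_j^per = σ² ∫_{−π}^{π} e^{−t²/ℓ²} e^{i j t} dt. Then |λ_j^per − √π σ² ℓ e^{−ℓ² j²/4}| ≤ (1/π) σ² ℓ² e^{−π²/ℓ²}; i.e., λ_j^per = √π σ² ℓ e^{−ℓ² j²/4} + O(σ² ℓ² e^{−π²/ℓ²}) with a constant independent of j. -/

import Mathlib

open MeasureTheory Real Set Complex Filter in
/-- The eigenvalue `λ_j^per = σ² ∫_{-π}^{π} e^{-t²/ℓ²} e^{ijt} dt`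
of the periodic Gaussian covariance operator satisfies
`|λ_j^per − √π σ² ℓ e^{-ℓ²j²/4}| ≤ (1/π) σ² ℓ² e^{-π²/ℓ²}`, uniformly in `j`. -/
theorem stmt10 (σ ℓ : ℝ) (hσ : 0 < σ) (hℓ : 0 < ℓ) (j : ℤ)
    (lam : ℂ)
    (hlam : lam = (σ ^ 2 : ℂ) * ∫ t in (-Real.pi)..Real.pi,
      (Real.exp (-(t ^ 2) / ℓ ^ 2) : ℂ) * Complex.exp (Complex.I * (j : ℂ) * (t : ℂ))) :
    ‖lam -
        ((Real.sqrt Real.pi * σ ^ 2 * ℓ * Real.exp (-(ℓ ^ 2 * (j : ℝ) ^ 2 / 4)) : ℝ) : ℂ)‖ ≤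
      (1 / Real.pi) * σ ^ 2 * ℓ ^ 2 * Real.exp (-(Real.pi ^ 2) / ℓ ^ 2) := by
  have hℓ2 : (0:ℝ) < 1 / ℓ ^ 2 := by positivity
  set b : ℂ := ((1 / ℓ ^ 2 : ℝ) : ℂ) with hbdef
  have hbre : 0 < b.re := by rw [hbdef, Complex.ofReal_re]; exact hℓ2
  set f : ℝ → ℂ := fun t => Complex.exp (Complex.I * (j : ℂ) * (t : ℂ)) * Complex.exp (-b * (t:ℂ) ^ 2) with hf
  set g : ℝ → ℝ := fun t => Real.exp (-(1 / ℓ ^ 2) * t ^ 2) with hg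
  -- integrand equality
  have hfg : ∀ t : ℝ, (Real.exp (-(t ^ 2) / ℓ ^ 2) : ℂ) * Complex.exp (Complex.I * (j : ℂ) * (t : ℂ)) = f t := by
    intro t
    rw [Complex.ofReal_exp, mul_comm]
    congr 2
    rw [hbdef]
    push_cast
    ring
  -- integrability
  have hint : Integrable f := by
    refine (integrable_cexp_quadratic hbre (Complex.I * (j:ℂ)) 0).congr
      (Eventually.of_forall fun t => ?_)
    simp only [hf, ← Complex.exp_add]
    ring_nf
  -- full-line Fourier integral value
  have hfull : ∫ t : ℝ, f t
      = ((Real.sqrt Real.pi * ℓ * Real.exp (-(ℓ ^ 2 * (j:ℝ) ^ 2 / 4)) : ℝ) : ℂ) := by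
    rw [hf, fourierIntegral_gaussian hbre ((j:ℂ))]
    have h1 : ((Real.pi : ℂ) / b) = ((Real.pi * ℓ ^ 2 : ℝ) : ℂ) := by
      rw [hbdef]; push_cast; field_simp
    have h2 : ((Real.pi * ℓ ^ 2 : ℝ) : ℂ) ^ (1/2 : ℂ) = ((Real.sqrt Real.pi * ℓ : ℝ) : ℂ) := by
      have he : ((1:ℂ)/2) = (((1:ℝ)/2 : ℝ) : ℂ) := by norm_num
      rw [he, ← Complex.ofReal_cpow (by positivity)]
      norm_cast
      rw [← Real.sqrt_eq_rpow, Real.sqrt_mul Real.pi_pos.le, Real.sqrt_sq hℓ.le]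
    have h3 : -((j:ℂ))^2/(4*b) = ((-(ℓ ^ 2 * (j:ℝ) ^ 2 / 4) : ℝ) : ℂ) := by
      rw [hbdef]; push_cast; field_simp
    rw [h1, h2, h3, ← Complex.ofReal_exp, ← Complex.ofReal_mul]
  have hM : ((Real.sqrt Real.pi * σ ^ 2 * ℓ * Real.exp (-(ℓ ^ 2 * (j : ℝ) ^ 2 / 4)) : ℝ) : ℂ)
      = (σ:ℂ)^2 * ∫ t : ℝ, f t := by
    rw [hfull]; push_cast; ring
  have hIoc : (∫ t in (-Real.pi)..Real.pi,
        (Real.exp (-(t ^ 2) / ℓ ^ 2) : ℂ) * Complex.exp (Complex.I * (j : ℂ) * (t : ℂ)))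
      = ∫ t in Set.Ioc (-Real.pi) Real.pi, f t := by
    rw [intervalIntegral.integral_of_le (by linarith [Real.pi_pos])]
    exact setIntegral_congr_fun measurableSet_Ioc fun t _ => hfg t
  have hkey : lam - ((Real.sqrt Real.pi * σ ^ 2 * ℓ * Real.exp (-(ℓ ^ 2 * (j : ℝ) ^ 2 / 4)) : ℝ) : ℂ)
      = -((σ:ℂ)^2 * ∫ t in (Set.Ioc (-Real.pi) Real.pi)ᶜ, f t) := by
    rw [hlam, hM, hIoc, ← MeasureTheory.integral_add_compl measurableSet_Ioc hint]
    ring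
  -- norm of integrand
  have hnorm : ∀ t : ℝ, ‖f t‖ = g t := by
    intro t
    rw [hf, hg, hbdef]
    simp only [norm_mul, Complex.norm_exp]
    rw [← Real.exp_add]
    congr 1
    have : (Complex.I * (j:ℂ) * (t:ℂ)).re = 0 := by simp [Complex.mul_re]
    rw [this, zero_add]
    have : (-((1 / ℓ ^ 2 : ℝ):ℂ) * (t:ℂ) ^ 2) = ((-(1 / ℓ ^ 2) * t ^ 2 : ℝ) : ℂ) := by
      push_cast; ring
    rw [this, Complex.ofReal_re]
  -- integrability of g
  have hgint : Integrable g := integrable_exp_neg_mul_sq hℓ2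
  -- symmetry of tails
  have hsymm : ∫ t in Set.Iic (-Real.pi), g t = ∫ t in Set.Ioi Real.pi, g t := by
    rw [← integral_comp_neg_Ioi]
    refine setIntegral_congr_fun measurableSet_Ioi fun t _ => ?_
    simp [hg]
  -- antiderivative for tail
  have hderiv : ∀ t : ℝ, HasDerivAt (fun t => -(ℓ^2/2) * g t) (t * g t) t := by
    intro t
    have h1 := (hasDerivAt_pow 2 t).const_mul (-(1/ℓ^2))
    have h2 := (h1.exp).const_mul (-(ℓ^2/2))
    simp only [hg]
    refine h2.congr_deriv ?_
    push_cast
    field_simp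
  have htend : Filter.Tendsto (fun t : ℝ => -(ℓ^2/2) * g t) Filter.atTop (nhds 0) := by
    have h1 : Filter.Tendsto (fun t:ℝ => (1/ℓ^2) * t^2) Filter.atTop Filter.atTop :=
      (tendsto_pow_atTop two_ne_zero).const_mul_atTop hℓ2
    have h2 : Filter.Tendsto (fun t:ℝ => -(1/ℓ^2) * t^2) Filter.atTop Filter.atBot := by
      refine (tendsto_neg_atTop_atBot.comp h1).congr fun t => ?_
      simp only [Function.comp_apply]
      ring
    have h0 : Filter.Tendsto g Filter.atTop (nhds 0) := by
      rw [hg]; exact Real.tendsto_exp_atBot.comp h2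
    have hc := h0.const_mul (-(ℓ^2/2))
    rw [mul_zero] at hc
    exact hc
  have hint2 : IntegrableOn (fun t => t * g t) (Set.Ioi Real.pi) := by
    refine integrableOn_Ioi_deriv_of_nonneg
      ((hderiv Real.pi).continuousAt.continuousWithinAt) (fun x _ => hderiv x)
      (fun x hx => ?_) htend
    have hx0 : (0:ℝ) ≤ x := le_of_lt (lt_trans Real.pi_pos hx)
    have : 0 ≤ g x := by simp only [hg]; positivity
    exact mul_nonneg hx0 this
  have hval : ∫ t in Set.Ioi Real.pi, t * g t = (ℓ^2/2) * Real.exp (-(Real.pi^2)/ℓ^2) := by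
    rw [integral_Ioi_of_hasDerivAt_of_tendsto' (fun x _ => hderiv x) hint2 htend]
    simp only [hg]
    have harg : -(1/ℓ^2) * Real.pi^2 = -(Real.pi^2)/ℓ^2 := by ring
    rw [harg]
    ring
  have hmono : ∫ t in Set.Ioi Real.pi, g t
      ≤ (1/Real.pi) * ((ℓ^2/2) * Real.exp (-(Real.pi^2)/ℓ^2)) := by
    rw [← hval, ← MeasureTheory.integral_const_mul]
    refine setIntegral_mono_on hgint.integrableOn (hint2.const_mul _) measurableSet_Ioi
      fun t ht => ?_
    have hπ := Real.pi_pos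
    have h1 : (1:ℝ) ≤ t / Real.pi := (one_le_div hπ).mpr (le_of_lt ht)
    have h2 : 0 ≤ g t := by simp only [hg]; positivity
    calc g t = 1 * g t := (one_mul _).symm
      _ ≤ (t / Real.pi) * g t := mul_le_mul_of_nonneg_right h1 h2
      _ = (1/Real.pi) * (t * g t) := by ring
  -- assemble
  have hπ := Real.pi_pos
  have hcompl : (Set.Ioc (-Real.pi) Real.pi)ᶜ = Set.Iic (-Real.pi) ∪ Set.Ioi Real.pi := by
    ext x
    simp only [Set.mem_compl_iff, Set.mem_Ioc, Set.mem_union, Set.mem_Iic, Set.mem_Ioi,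
      not_and_or, not_lt, not_le]
  have htail : ∫ t in (Set.Ioc (-Real.pi) Real.pi)ᶜ, g t
      = (∫ t in Set.Iic (-Real.pi), g t) + ∫ t in Set.Ioi Real.pi, g t := by
    rw [hcompl]
    exact setIntegral_union (Set.Iic_disjoint_Ioi (by linarith)) measurableSet_Ioi
      hgint.integrableOn hgint.integrableOn
  calc ‖lam -
        ((Real.sqrt Real.pi * σ ^ 2 * ℓ * Real.exp (-(ℓ ^ 2 * (j : ℝ) ^ 2 / 4)) : ℝ) : ℂ)‖
      = σ^2 * ‖∫ t in (Set.Ioc (-Real.pi) Real.pi)ᶜ, f t‖ := by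
        rw [hkey, norm_neg, norm_mul, norm_pow, Complex.norm_real, Real.norm_eq_abs, abs_of_pos hσ]
    _ ≤ σ^2 * ∫ t in (Set.Ioc (-Real.pi) Real.pi)ᶜ, g t := by
        have h := norm_integral_le_integral_norm (μ := volume.restrict (Set.Ioc (-Real.pi) Real.pi)ᶜ) f
        simp_rw [hnorm] at h
        exact mul_le_mul_of_nonneg_left h (by positivity)
    _ = σ^2 * (2 * ∫ t in Set.Ioi Real.pi, g t) := by rw [htail, hsymm]; ring
    _ ≤ σ^2 * (2 * ((1/Real.pi) * ((ℓ^2/2) * Real.exp (-(Real.pi^2)/ℓ^2)))) := by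
        have hσ2 : (0:ℝ) ≤ σ^2 := by positivity
        nlinarith [hmono]
    _ = (1 / Real.pi) * σ ^ 2 * ℓ ^ 2 * Real.exp (-(Real.pi ^ 2) / ℓ ^ 2) := by ring
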